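/- Let p ∈ {2, 3}, F the free group on two generators, and n ≥ 2. Then F/λ_n(F) is not a Beauville group. -/

import Mathlib

/-- The subgroup generated by `m`-th powers of elements of `H`. -/
def pPow {G : Type*} [Group G] (H : Subgroup G) (m : ℕ) : Subgroup G :=
  Subgroup.closure {x : G | ∃ h ∈ H, x = h ^ m}

/-- The `p`-central series: `lam p 1 = ⊤` and `lam p (n+1) = [lam p n, G] ⊔ (lam p n)^p`.
    (We also set `lam p 0 = ⊤`.) -/
def lam {G : Type*} [Group G] (p : ℕ) : ℕ → Subgroup G
  | 0 => ⊤
  | 1 => ⊤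
  | (n+2) => ⁅(lam p (n+1) : Subgroup G), (⊤ : Subgroup G)⁆ ⊔ pPow (lam p (n+1)) p

theorem pPow_normal {G : Type*} [Group G] (H : Subgroup G) [hH : H.Normal] (m : ℕ) :
    (pPow H m).Normal := by
  have key : ∀ x ∈ pPow H m, ∀ g : G, g * x * g⁻¹ ∈ pPow H m := by
    intro x hx
    induction hx using Subgroup.closure_induction with
    | mem y hy =>
        intro g
        obtain ⟨h, hh, rfl⟩ := hy
        refine Subgroup.subset_closure ⟨g * h * g⁻¹, hH.conj_mem h hh g, ?_⟩
        exact conj_pow.symm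
    | one => intro g; simpa using (pPow H m).one_mem
    | mul x y hx hy ihx ihy =>
        intro g
        have h2 := mul_mem (ihx g) (ihy g)
        have : g * x * g⁻¹ * (g * y * g⁻¹) = g * (x * y) * g⁻¹ := by group
        rwa [this] at h2
    | inv x hx ihx =>
        intro g
        have h2 := inv_mem (ihx g)
        have : (g * x * g⁻¹)⁻¹ = g * x⁻¹ * g⁻¹ := by group
        rwa [this] at h2
  exact ⟨fun x hx g => key x hx g⟩

theorem lam_normal' {G : Type*} [Group G] (p : ℕ) : ∀ n, (lam (G := G) p n).Normal
  | 0 => inferInstanceAs (⊤ : Subgroup G).Normal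
  | 1 => inferInstanceAs (⊤ : Subgroup G).Normal
  | (n+2) => by
      haveI := lam_normal' (G := G) p (n+1)
      haveI := pPow_normal (lam (G := G) p (n+1)) p
      show (⁅(lam p (n+1) : Subgroup G), (⊤ : Subgroup G)⁆ ⊔ pPow (lam p (n+1)) p).Normal
      infer_instance

instance lam_normal {G : Type*} [Group G] (p n : ℕ) : (lam (G := G) p n).Normal :=
  lam_normal' p n

/-- The union of all conjugates of the cyclic subgroup generated by `x`. -/
def conjClosure {G : Type*} [Group G] (x : G) : Set G :=
  ⋃ g : G, (fun h => g⁻¹ * h * g) '' (Subgroup.zpowers x : Set G)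

/-- `Σ(x,y)`: the union of all conjugates of `⟨x⟩`, `⟨y⟩` and `⟨xy⟩`. -/
def SigmaSet {G : Type*} [Group G] (x y : G) : Set G :=
  conjClosure x ∪ conjClosure y ∪ conjClosure (x * y)

/-- `{x₁,y₁}` and `{x₂,y₂}` form a Beauville structure for `G`. -/
def IsBeauvilleStructure {G : Type*} [Group G] (x₁ y₁ x₂ y₂ : G) : Prop :=
  Subgroup.closure {x₁, y₁} = ⊤ ∧ Subgroup.closure {x₂, y₂} = ⊤ ∧
    SigmaSet x₁ y₁ ∩ SigmaSet x₂ y₂ = {1}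

/-- A Beauville group: a finite nontrivial (2-generated) group admitting a Beauville
structure. -/
def IsBeauvilleGroup (G : Type*) [Group G] : Prop :=
  Finite G ∧ Nontrivial G ∧ ∃ x₁ y₁ x₂ y₂ : G, IsBeauvilleStructure x₁ y₁ x₂ y₂

open scoped commutatorElement

theorem lam_two_def {G : Type*} [Group G] (p : ℕ) :
    lam (G := G) p 2 = ⁅(⊤ : Subgroup G), (⊤ : Subgroup G)⁆ ⊔ pPow (⊤ : Subgroup G) p := rfl

theorem lam_add_two_def {G : Type*} [Group G] (p n : ℕ) :
    lam (G := G) p (n+2) = ⁅(lam p (n+1) : Subgroup G), (⊤ : Subgroup G)⁆ ⊔ pPow (lam p (n+1)) p := rfl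

theorem pPow_le {G : Type*} [Group G] {K L : Subgroup G} (m : ℕ) (h : K ≤ L) : pPow K m ≤ L :=
  (Subgroup.closure_le L).mpr (by rintro x ⟨k, hk, rfl⟩; exact pow_mem (h hk) m)

theorem pPow_mono {G : Type*} [Group G] {K L : Subgroup G} (m : ℕ) (h : K ≤ L) :
    pPow K m ≤ pPow L m :=
  Subgroup.closure_mono (by rintro x ⟨k, hk, rfl⟩; exact ⟨k, h hk, rfl⟩)

theorem map_pPow {G G' : Type*} [Group G] [Group G'] (f : G →* G') (K : Subgroup G) (m : ℕ) :
    (pPow K m).map f = pPow (K.map f) m := by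
  rw [pPow, pPow, MonoidHom.map_closure]
  congr 1
  ext x
  constructor
  · rintro ⟨_, ⟨k, hk, rfl⟩, rfl⟩; exact ⟨f k, ⟨k, hk, rfl⟩, map_pow f k m⟩
  · rintro ⟨_, ⟨k, hk, rfl⟩, rfl⟩; exact ⟨k ^ m, ⟨k, hk, rfl⟩, map_pow f k m⟩

theorem lam_succ_le {G : Type*} [Group G] (p k : ℕ) : lam (G := G) p (k+2) ≤ lam p (k+1) := by
  rw [lam_add_two_def]
  apply sup_le
  · rw [Subgroup.commutator_le]
    intro h hh g _
    have heq : ⁅h, g⁆ = h * (g * h⁻¹ * g⁻¹) := by group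
    rw [heq]
    exact mul_mem hh ((lam_normal p (k+1)).conj_mem h⁻¹ (inv_mem hh) g)
  · exact pPow_le p le_rfl

theorem lam_le_two {G : Type*} [Group G] (p : ℕ) : ∀ m, lam (G := G) p (m+2) ≤ lam p 2
  | 0 => le_rfl
  | (m+1) => (lam_succ_le p (m+1)).trans (lam_le_two p m)

theorem map_lam_le {G G' : Type*} [Group G] [Group G'] (p : ℕ) (f : G →* G') :
    ∀ k, (lam (G := G) p k).map f ≤ lam (G := G') p k
  | 0 => le_top
  | 1 => le_top
  | (k+2) => by
    rw [lam_add_two_def, Subgroup.map_sup, Subgroup.map_commutator, map_pPow, lam_add_two_def]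
    apply sup_le
    · exact le_trans (Subgroup.commutator_mono (map_lam_le p f (k+1)) le_top) le_sup_left
    · exact le_trans (pPow_mono p (map_lam_le p f (k+1))) le_sup_right

theorem map_lam_eq {G G' : Type*} [Group G] [Group G'] (p : ℕ) (f : G →* G')
    (hf : Function.Surjective f) :
    ∀ k, (lam (G := G) p k).map f = lam (G := G') p k
  | 0 => Subgroup.map_top_of_surjective f hf
  | 1 => Subgroup.map_top_of_surjective f hf
  | (k+2) => by
    rw [lam_add_two_def, Subgroup.map_sup, Subgroup.map_commutator, map_pPow,
      map_lam_eq p f hf (k+1), Subgroup.map_top_of_surjective f hf, lam_add_two_def]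

theorem lam_le_range_pow {A : Type*} [CommGroup A] (p : ℕ) :
    ∀ k, lam (G := A) p (k+1) ≤ MonoidHom.range (powMonoidHom (p ^ k) : A →* A)
  | 0 => fun a _ => ⟨a, pow_one a⟩
  | (k+1) => by
    rw [lam_add_two_def]
    apply sup_le
    · rw [Subgroup.commutator_le]
      intro g₁ _ g₂ _
      rw [commutatorElement_eq_one_iff_commute.mpr (mul_comm g₁ g₂)]
      exact one_mem _
    · rw [pPow, Subgroup.closure_le]
      rintro x ⟨h, hh, rfl⟩
      obtain ⟨b, rfl⟩ := lam_le_range_pow p k hh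
      exact ⟨b, by rw [powMonoidHom_apply, powMonoidHom_apply, ← pow_mul, ← pow_succ]⟩

theorem lam_eq_one_of_exponent {A : Type*} [CommGroup A] {p t : ℕ}
    (hA : ∀ a : A, a ^ (p ^ t) = 1) {a : A} (ha : a ∈ lam p (t+1)) : a = 1 := by
  obtain ⟨b, rfl⟩ := lam_le_range_pow p t ha
  rw [powMonoidHom_apply]
  exact hA b

theorem lemB {H : Type*} [Group H] (p m : ℕ) (u z : H) (hz : z ∈ lam p (m+1)) :
    (u * z) ^ p * (u ^ p)⁻¹ ∈ lam p (m+2) := by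
  set N := lam (G := H) p (m+2) with hN
  have hcz : ⁅z⁻¹, u⁻¹⁆ ∈ N := by
    rw [hN, lam_add_two_def]
    exact Subgroup.mem_sup_left
      (Subgroup.commutator_mem_commutator (inv_mem hz) (Subgroup.mem_top u⁻¹))
  have hzp : z ^ p ∈ N := by
    rw [hN, lam_add_two_def]
    exact Subgroup.mem_sup_right (Subgroup.subset_closure ⟨z, hz, rfl⟩)
  let π : H →* H ⧸ N := QuotientGroup.mk' N
  have hc : Commute (π u) (π z) := by
    rw [Commute, SemiconjBy, ← map_mul, ← map_mul]
    have : (u * z)⁻¹ * (z * u) = ⁅z⁻¹, u⁻¹⁆ := by group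
    refine (QuotientGroup.eq (s := N) ..).mpr ?_
    rw [this]
    exact hcz
  have hzp1 : (π z) ^ p = 1 := by
    rw [← map_pow]
    exact (QuotientGroup.eq_one_iff _).mpr hzp
  have h3 : π (u ^ p) = π ((u * z) ^ p) := by
    rw [map_pow, map_pow, map_mul, hc.mul_pow, hzp1, mul_one]
  have h4 : (u ^ p)⁻¹ * (u * z) ^ p ∈ N := (QuotientGroup.eq (s := N) ..).mp h3
  have h5 := (lam_normal p (m+2)).conj_mem _ h4 (u ^ p)
  have heq : u ^ p * ((u ^ p)⁻¹ * (u * z) ^ p) * (u ^ p)⁻¹ = (u * z) ^ p * (u ^ p)⁻¹ := by group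
  rwa [heq] at h5

theorem lemA {H : Type*} [Group H] (p : ℕ) : ∀ (k : ℕ) (x y : H), y ∈ lam p 2 →
    ∃ z ∈ lam (G := H) p (k+2), (x * y) ^ (p ^ k) = x ^ (p ^ k) * z
  | 0, x, y, hy => ⟨y, hy, by simp⟩
  | (k+1), x, y, hy => by
    obtain ⟨z, hz, hxy⟩ := lemA p k x y hy
    have hb := lemB p (k+1) (x ^ (p ^ k)) z hz
    refine ⟨(x ^ (p ^ (k+1)))⁻¹ * (x * y) ^ (p ^ (k+1)), ?_, by group⟩
    have h1 : (x * y) ^ (p ^ (k+1)) = (x ^ (p ^ k) * z) ^ p := by rw [pow_succ, pow_mul, hxy]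
    have h2 : (x ^ (p ^ k)) ^ p = x ^ (p ^ (k+1)) := by rw [← pow_mul, ← pow_succ]
    rw [h1, ← h2]
    have h5 := (lam_normal p (k+1+2)).conj_mem _ hb ((x ^ (p ^ k)) ^ p)⁻¹
    have heq : ((x ^ (p ^ k)) ^ p)⁻¹ * ((x ^ (p ^ k) * z) ^ p * ((x ^ (p ^ k)) ^ p)⁻¹) *
        (((x ^ (p ^ k)) ^ p)⁻¹)⁻¹ = ((x ^ (p ^ k)) ^ p)⁻¹ * (x ^ (p ^ k) * z) ^ p := by group
    rwa [heq] at h5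

theorem pair_exp (q : ℕ) (v : Multiplicative (ZMod q × ZMod q)) : v ^ q = 1 := by
  have h : q • v.toAdd = 0 := by
    have : q • v.toAdd = (q • v.toAdd.1, q • v.toAdd.2) := rfl
    rw [this, nsmul_eq_mul, nsmul_eq_mul, ZMod.natCast_self, zero_mul, zero_mul]
    rfl
  calc v ^ q = Multiplicative.ofAdd (v.toAdd) ^ q := by rw [ofAdd_toAdd]
  _ = Multiplicative.ofAdd (q • v.toAdd) := (ofAdd_nsmul _ _).symm
  _ = 1 := by rw [h]; rfl

def toPair (q : ℕ) : FreeGroup (Fin 2) →* Multiplicative (ZMod q × ZMod q) :=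
  FreeGroup.lift (fun i =>
    Multiplicative.ofAdd (if i = 0 then ((1, 0) : ZMod q × ZMod q) else (0, 1)))

theorem toPair_lam_ker (p t : ℕ) {w : FreeGroup (Fin 2)} (hw : w ∈ lam p (t+1)) :
    toPair (p ^ t) w = 1 := by
  have h1 : toPair (p ^ t) w ∈ lam p (t+1) :=
    map_lam_le p (toPair (p ^ t)) (t+1) ⟨w, hw, rfl⟩
  exact lam_eq_one_of_exponent (fun a => pair_exp (p ^ t) a) h1

theorem ker_toPair_le (p : ℕ) (hp : 2 ≤ p) {w : FreeGroup (Fin 2)}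
    (hw : toPair p w = 1) : w ∈ lam p 2 := by
  haveI : NeZero p := ⟨by omega⟩
  haveI : Fact (1 < p) := ⟨by omega⟩
  set N := lam (G := FreeGroup (Fin 2)) p 2 with hN
  set Q := FreeGroup (Fin 2) ⧸ N with hQ
  let π : FreeGroup (Fin 2) →* Q := QuotientGroup.mk' N
  have hcommQ : ∀ a b : Q, a * b = b * a := by
    intro a b
    induction a using QuotientGroup.induction_on with | _ x =>
    induction b using QuotientGroup.induction_on with | _ y =>
    show ((x * y : FreeGroup (Fin 2)) : Q) = ((y * x : FreeGroup (Fin 2)) : Q)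
    refine (QuotientGroup.eq ..).mpr ?_
    have heq : (x * y)⁻¹ * (y * x) = ⁅y⁻¹, x⁻¹⁆ := by group
    rw [heq, hN, lam_two_def]
    exact Subgroup.mem_sup_left
      (Subgroup.commutator_mem_commutator (Subgroup.mem_top _) (Subgroup.mem_top _))
  have hpQ : ∀ a : Q, a ^ p = 1 := by
    intro a
    induction a using QuotientGroup.induction_on with | _ x =>
    show ((x ^ p : FreeGroup (Fin 2)) : Q) = 1
    rw [QuotientGroup.eq_one_iff, hN, lam_two_def]
    exact Subgroup.mem_sup_right (Subgroup.subset_closure ⟨x, Subgroup.mem_top x, rfl⟩)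
  letI : CommGroup Q := { (inferInstance : Group Q) with mul_comm := hcommQ }
  set a : Q := π (FreeGroup.of 0) with ha
  set b : Q := π (FreeGroup.of 1) with hb
  let θ : Multiplicative (ZMod p × ZMod p) →* Q :=
  { toFun := fun v => a ^ (v.toAdd.1.val) * b ^ (v.toAdd.2.val)
    map_one' := by
      show a ^ ((1 : Multiplicative (ZMod p × ZMod p)).toAdd.1.val) * _ = 1
      simp [ZMod.val_zero]
    map_mul' := by
      intro v w
      show a ^ ((v * w).toAdd.1.val) * b ^ ((v * w).toAdd.2.val) = _
      rw [toAdd_mul, Prod.fst_add, Prod.snd_add, ZMod.val_add, ZMod.val_add,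
        ← pow_eq_pow_mod _ (hpQ a), ← pow_eq_pow_mod _ (hpQ b), pow_add, pow_add]
      exact mul_mul_mul_comm _ _ _ _ }
  have hcomp : θ.comp (toPair p) = π := by
    refine FreeGroup.ext_hom _ _ (fun i => ?_)
    fin_cases i
    · show θ (toPair p (FreeGroup.of 0)) = a
      rw [toPair, FreeGroup.lift_apply_of, if_pos rfl]
      show a ^ ((1 : ZMod p).val) * b ^ ((0 : ZMod p).val) = a
      rw [ZMod.val_one, ZMod.val_zero, pow_one, pow_zero, mul_one]
    · show θ (toPair p (FreeGroup.of 1)) = b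
      rw [toPair, FreeGroup.lift_apply_of, if_neg (by decide), ]
      show a ^ ((0 : ZMod p).val) * b ^ ((1 : ZMod p).val) = b
      rw [ZMod.val_one, ZMod.val_zero, pow_one, pow_zero, one_mul]
  have hπw : π w = 1 := by
    rw [← hcomp]
    show θ (toPair p w) = 1
    rw [hw, map_one]
  rwa [← QuotientGroup.ker_mk' N, MonoidHom.mem_ker]

theorem pow_smul_ne_zero {p m : ℕ} (hp : 2 ≤ p) {a : ZMod (p ^ (m+1))}
    (ha : (a.val : ZMod p) ≠ 0) : (p ^ m : ℕ) • a ≠ 0 := by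
  haveI : NeZero (p ^ (m+1)) := ⟨pow_ne_zero _ (by omega)⟩
  intro h
  apply ha
  rw [ZMod.natCast_eq_zero_iff]
  have h2 : ((p ^ m * a.val : ℕ) : ZMod (p ^ (m+1))) = 0 := by
    rw [Nat.cast_mul, ZMod.natCast_val, ZMod.cast_id, ← nsmul_eq_mul]
    exact h
  have h3 : p ^ (m+1) ∣ p ^ m * a.val := (ZMod.natCast_eq_zero_iff _ _).mp h2
  have hpm : 0 < p ^ m := Nat.pow_pos (show 0 < p by omega)
  have h4 : p ^ m * p ∣ p ^ m * a.val := by rw [← pow_succ]; exact h3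
  exact (Nat.mul_dvd_mul_iff_left hpm).mp h4

def redPair (q p : ℕ) (h : p ∣ q) :
    Multiplicative (ZMod q × ZMod q) →* Multiplicative (ZMod p × ZMod p) :=
  AddMonoidHom.toMultiplicative
    ((ZMod.castHom h (ZMod p)).toAddMonoidHom.prodMap (ZMod.castHom h (ZMod p)).toAddMonoidHom)

theorem redPair_toPair (q p : ℕ) (h : p ∣ q) :
    (redPair q p h).comp (toPair q) = toPair p := by
  refine FreeGroup.ext_hom _ _ (fun i => ?_)
  fin_cases i <;>
    · simp [redPair, toPair, FreeGroup.lift_apply_of, AddMonoidHom.toMultiplicative,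
        AddMonoidHom.prodMap, Prod.map, AddMonoidHom.prod_apply]
      exact (ZMod.castHom_apply (h := h) 1).symm.trans (map_one _)

theorem span_of_closure {p : ℕ} (hp : 2 ≤ p) {a b : Multiplicative (ZMod p × ZMod p)}
    (h : Subgroup.closure {a, b} = ⊤) (v : Multiplicative (ZMod p × ZMod p)) :
    ∃ i j : Fin p, v = a ^ (i : ℕ) * b ^ (j : ℕ) := by
  have hexp : ∀ c : Multiplicative (ZMod p × ZMod p), c ^ p = 1 := fun c => pair_exp p c
  have hinv : ∀ c : Multiplicative (ZMod p × ZMod p), c ^ (p - 1) = c⁻¹ := by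
    intro c
    refine eq_inv_of_mul_eq_one_left ?_
    rw [← pow_succ, show p - 1 + 1 = p by omega]
    exact hexp c
  let S : Subgroup (Multiplicative (ZMod p × ZMod p)) :=
  { carrier := {v | ∃ i j : ℕ, v = a ^ i * b ^ j}
    one_mem' := ⟨0, 0, by simp⟩
    mul_mem' := by
      rintro u w ⟨i, j, rfl⟩ ⟨i', j', rfl⟩
      exact ⟨i + i', j + j', by rw [pow_add, pow_add, mul_mul_mul_comm]⟩
    inv_mem' := by
      rintro u ⟨i, j, rfl⟩
      refine ⟨i * (p - 1), j * (p - 1), ?_⟩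
      rw [pow_mul, pow_mul, hinv, hinv, mul_inv]
  }
  have hS : v ∈ S := by
    have hle : (⊤ : Subgroup (Multiplicative (ZMod p × ZMod p))) ≤ S := by
      rw [← h]
      refine (Subgroup.closure_le S).mpr ?_
      rintro c (rfl | rfl)
      exacts [⟨1, 0, by simp⟩, ⟨0, 1, by simp⟩]
    exact hle (Subgroup.mem_top v)
  obtain ⟨i, j, rfl⟩ := hS
  have h0 : 0 < p := by omega
  refine ⟨⟨i % p, Nat.mod_lt _ h0⟩, ⟨j % p, Nat.mod_lt _ h0⟩, ?_⟩
  show a ^ i * b ^ j = a ^ (i % p) * b ^ (j % p)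
  rw [← pow_eq_pow_mod _ (hexp a), ← pow_eq_pow_mod _ (hexp b)]

theorem pow_mem_conjClosure {G : Type*} [Group G] (x : G) (m : ℕ) :
    x ^ m ∈ conjClosure x := by
  refine Set.mem_iUnion.mpr ⟨1, ?_⟩
  exact ⟨x ^ m, ⟨(m : ℤ), by simp⟩, by simp⟩

set_option maxRecDepth 100000 in
set_option synthInstance.maxSize 2000 in
set_option synthInstance.maxHeartbeats 1000000 in
set_option maxHeartbeats 4000000 in
theorem lemC {p : ℕ} (hp : p = 2 ∨ p = 3) : ∀ (a₁ b₁ a₂ b₂ : ZMod p × ZMod p),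
    (∃ i j : Fin p, ((1,0) : ZMod p × ZMod p) = (i : ℕ) • a₁ + (j : ℕ) • b₁) →
    (∃ i j : Fin p, ((0,1) : ZMod p × ZMod p) = (i : ℕ) • a₁ + (j : ℕ) • b₁) →
    (∃ i j : Fin p, ((1,0) : ZMod p × ZMod p) = (i : ℕ) • a₂ + (j : ℕ) • b₂) →
    (∃ i j : Fin p, ((0,1) : ZMod p × ZMod p) = (i : ℕ) • a₂ + (j : ℕ) • b₂) →
    ∃ s t : Fin 3, ∃ k : Fin p,
      ![a₂, b₂, a₂ + b₂] t = (k : ℕ) • (![a₁, b₁, a₁ + b₁] s) ∧ ![a₂, b₂, a₂ + b₂] t ≠ 0 := by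
  rcases hp with rfl | rfl
  · decide
  · decide

theorem toPair_lam_ker' (p t q : ℕ) (hq : q = p ^ t) {w : FreeGroup (Fin 2)}
    (hw : w ∈ lam p (t+1)) : toPair q w = 1 := by
  subst hq; exact toPair_lam_ker p t hw

/-- For `p ∈ {2, 3}` and `n ≥ 2`, the quotient `F/λ_n(F)` of the free group of rank 2
is not a Beauville group. -/
theorem statement_7 (p n : ℕ) (hp : p = 2 ∨ p = 3) (hn : 2 ≤ n) :
    ¬ IsBeauvilleGroup (FreeGroup (Fin 2) ⧸ lam p n) := by
  obtain ⟨m, rfl⟩ : ∃ m, n = m + 2 := ⟨n - 2, by omega⟩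
  have hp2 : 2 ≤ p := by rcases hp with rfl | rfl <;> omega
  haveI : NeZero p := ⟨by omega⟩
  rintro ⟨-, -, x₁, y₁, x₂, y₂, hgen₁, hgen₂, hsig⟩
  let N : Subgroup (FreeGroup (Fin 2)) := lam p (m+2)
  let π : FreeGroup (Fin 2) →* FreeGroup (Fin 2) ⧸ N := QuotientGroup.mk' N
  have hπ : Function.Surjective π := QuotientGroup.mk'_surjective N
  -- the two linear character maps
  have hψker : N ≤ (toPair p).ker := fun w hw =>
    MonoidHom.mem_ker.mpr (toPair_lam_ker' p 1 p (pow_one p).symm (lam_le_two p m hw))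
  have hφker : N ≤ (toPair (p ^ (m+1))).ker := fun w hw =>
    MonoidHom.mem_ker.mpr (toPair_lam_ker' p (m+1) _ rfl hw)
  let ψG : FreeGroup (Fin 2) ⧸ N →* Multiplicative (ZMod p × ZMod p) :=
    QuotientGroup.lift N (toPair p) hψker
  let φG : FreeGroup (Fin 2) ⧸ N →* Multiplicative (ZMod (p ^ (m+1)) × ZMod (p ^ (m+1))) :=
    QuotientGroup.lift N (toPair (p ^ (m+1))) hφker
  have hdvd : p ∣ p ^ (m+1) := dvd_pow_self p (Nat.succ_ne_zero m)
  have hψGmk : ∀ w : FreeGroup (Fin 2), ψG (π w) = toPair p w := fun w =>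
    QuotientGroup.lift_mk' N hψker w
  have hr2G : ∀ g, redPair (p ^ (m+1)) p hdvd (φG g) = ψG g := by
    intro g
    induction g using QuotientGroup.induction_on with | _ w =>
    calc redPair (p ^ (m+1)) p hdvd (φG ↑w)
        = redPair (p ^ (m+1)) p hdvd (toPair (p ^ (m+1)) w) := by
          rw [QuotientGroup.lift_mk' N hφker w]
      _ = toPair p w := DFunLike.congr_fun (redPair_toPair _ _ hdvd) w
      _ = ψG ↑w := (QuotientGroup.lift_mk' N hψker w).symm
  have lamG_bot : lam (G := FreeGroup (Fin 2) ⧸ N) p (m+2) = ⊥ := by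
    rw [← map_lam_eq p π hπ (m+2), Subgroup.map_eq_bot_iff, QuotientGroup.ker_mk']
  have congrG : ∀ x y : FreeGroup (Fin 2) ⧸ N, y ∈ lam p 2 → (x * y) ^ (p ^ m) = x ^ (p ^ m) := by
    intro x y hy
    obtain ⟨z, hz, hxy⟩ := lemA p m x y hy
    rw [lamG_bot, Subgroup.mem_bot] at hz
    rw [hxy, hz, mul_one]
  have kerψG : ∀ g, ψG g = 1 → g ∈ lam (G := FreeGroup (Fin 2) ⧸ N) p 2 := by
    intro g hg
    induction g using QuotientGroup.induction_on with | _ w =>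
    have h1 : toPair p w = 1 := by rw [← hψGmk w]; exact hg
    have h2 : w ∈ lam p 2 := ker_toPair_le p hp2 h1
    rw [← map_lam_eq p π hπ 2]
    exact ⟨w, h2, rfl⟩
  have hψsurj : Function.Surjective ψG := by
    intro v
    refine ⟨π ((FreeGroup.of 0) ^ (v.toAdd.1.val) * (FreeGroup.of 1) ^ (v.toAdd.2.val)), ?_⟩
    rw [hψGmk, map_mul, map_pow, map_pow]
    show (toPair p (FreeGroup.of 0)) ^ _ * (toPair p (FreeGroup.of 1)) ^ _ = v
    rw [toPair, FreeGroup.lift_apply_of, FreeGroup.lift_apply_of, if_pos rfl,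
      if_neg (show (1 : Fin 2) ≠ 0 by decide)]
    apply Multiplicative.toAdd.injective
    rw [toAdd_mul, toAdd_pow, toAdd_pow, toAdd_ofAdd, toAdd_ofAdd]
    have e1 : v.toAdd.1.val • ((1, 0) : ZMod p × ZMod p) = (v.toAdd.1, 0) := by
      ext
      · show v.toAdd.1.val • (1 : ZMod p) = v.toAdd.1
        rw [nsmul_eq_mul, mul_one, ZMod.natCast_val, ZMod.cast_id]
      · show v.toAdd.1.val • (0 : ZMod p) = 0
        rw [smul_zero]
    have e2 : v.toAdd.2.val • ((0, 1) : ZMod p × ZMod p) = (0, v.toAdd.2) := by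
      ext
      · show v.toAdd.2.val • (0 : ZMod p) = 0
        rw [smul_zero]
      · show v.toAdd.2.val • (1 : ZMod p) = v.toAdd.2
        rw [nsmul_eq_mul, mul_one, ZMod.natCast_val, ZMod.cast_id]
    rw [e1, e2]
    ext
    · show v.toAdd.1 + 0 = v.toAdd.1; rw [add_zero]
    · show 0 + v.toAdd.2 = v.toAdd.2; rw [zero_add]
  -- images generate
  have hVgen₁ : Subgroup.closure {ψG x₁, ψG y₁} = ⊤ := by
    have h := congrArg (Subgroup.map ψG) hgen₁
    rwa [MonoidHom.map_closure, Set.image_insert_eq, Set.image_singleton,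
      Subgroup.map_top_of_surjective _ hψsurj] at h
  have hVgen₂ : Subgroup.closure {ψG x₂, ψG y₂} = ⊤ := by
    have h := congrArg (Subgroup.map ψG) hgen₂
    rwa [MonoidHom.map_closure, Set.image_insert_eq, Set.image_singleton,
      Subgroup.map_top_of_surjective _ hψsurj] at h
  -- spanning hypotheses, additively
  have conv : ∀ (a b : Multiplicative (ZMod p × ZMod p)) (v : ZMod p × ZMod p),
      (∃ i j : Fin p, Multiplicative.ofAdd v = a ^ (i : ℕ) * b ^ (j : ℕ)) →
      ∃ i j : Fin p, v = (i : ℕ) • a.toAdd + (j : ℕ) • b.toAdd := by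
    rintro a b v ⟨i, j, hij⟩
    refine ⟨i, j, ?_⟩
    have h := congrArg Multiplicative.toAdd hij
    rwa [toAdd_ofAdd, toAdd_mul, toAdd_pow, toAdd_pow] at h
  have h11 := conv _ _ _ (span_of_closure hp2 hVgen₁ (Multiplicative.ofAdd (1, 0)))
  have h12 := conv _ _ _ (span_of_closure hp2 hVgen₁ (Multiplicative.ofAdd (0, 1)))
  have h21 := conv _ _ _ (span_of_closure hp2 hVgen₂ (Multiplicative.ofAdd (1, 0)))
  have h22 := conv _ _ _ (span_of_closure hp2 hVgen₂ (Multiplicative.ofAdd (0, 1)))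
  obtain ⟨s, t, k, hk, hne⟩ := lemC hp (ψG x₁).toAdd (ψG y₁).toAdd (ψG x₂).toAdd (ψG y₂).toAdd
    h11 h12 h21 h22
  -- triples
  set u₁ : FreeGroup (Fin 2) ⧸ N := ![x₁, y₁, x₁ * y₁] s with hu₁
  set u₂ : FreeGroup (Fin 2) ⧸ N := ![x₂, y₂, x₂ * y₂] t with hu₂
  have hT1 : (ψG u₁).toAdd = ![(ψG x₁).toAdd, (ψG y₁).toAdd,
      (ψG x₁).toAdd + (ψG y₁).toAdd] s := by
    rw [hu₁]; fin_cases s <;> simp [map_mul, toAdd_mul]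
  have hT2 : (ψG u₂).toAdd = ![(ψG x₂).toAdd, (ψG y₂).toAdd,
      (ψG x₂).toAdd + (ψG y₂).toAdd] t := by
    rw [hu₂]; fin_cases t <;> simp [map_mul, toAdd_mul]
  have h_eq : ψG u₂ = ψG u₁ ^ (k : ℕ) :=
    Multiplicative.toAdd.injective (by rw [toAdd_pow, hT1, hT2]; exact hk)
  have h_ne1 : ψG u₂ ≠ 1 := by
    intro hcon
    apply hne
    rw [← hT2, hcon, toAdd_one]
  -- the congruence
  have hy2 : (u₁ ^ (k : ℕ))⁻¹ * u₂ ∈ lam (G := FreeGroup (Fin 2) ⧸ N) p 2 := by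
    apply kerψG
    rw [map_mul, map_inv, map_pow, h_eq]
    group
  have hpow : u₂ ^ (p ^ m) = u₁ ^ ((k : ℕ) * p ^ m) := by
    have h5 : u₂ = (u₁ ^ (k : ℕ)) * ((u₁ ^ (k : ℕ))⁻¹ * u₂) := by group
    calc u₂ ^ (p ^ m) = ((u₁ ^ (k : ℕ)) * ((u₁ ^ (k : ℕ))⁻¹ * u₂)) ^ (p ^ m) := by rw [← h5]
      _ = (u₁ ^ (k : ℕ)) ^ (p ^ m) := congrG _ _ hy2
      _ = u₁ ^ ((k : ℕ) * p ^ m) := by rw [← pow_mul]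
  -- nontriviality of u₂ ^ (p ^ m)
  have hgne : u₂ ^ (p ^ m) ≠ 1 := by
    intro hcon
    have hcpow : (φG u₂) ^ (p ^ m) = 1 := by rw [← map_pow, hcon, map_one]
    have htadd : (p ^ m) • (φG u₂).toAdd = 0 := by
      have h := congrArg Multiplicative.toAdd hcpow
      rwa [toAdd_pow, toAdd_one] at h
    have hr : redPair (p ^ (m+1)) p hdvd (φG u₂) ≠ 1 := by rw [hr2G]; exact h_ne1
    have hr' : (redPair (p ^ (m+1)) p hdvd (φG u₂)).toAdd ≠ 0 := by
      intro h0; exact hr (Multiplicative.toAdd.injective (by rw [h0, toAdd_one]))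
    have hcomp : (redPair (p ^ (m+1)) p hdvd (φG u₂)).toAdd =
        (ZMod.castHom hdvd (ZMod p) (φG u₂).toAdd.1,
         ZMod.castHom hdvd (ZMod p) (φG u₂).toAdd.2) := rfl
    rw [hcomp] at hr'
    have hcases : ((φG u₂).toAdd.1.val : ZMod p) ≠ 0 ∨ ((φG u₂).toAdd.2.val : ZMod p) ≠ 0 := by
      by_contra hcc
      push_neg at hcc
      apply hr'
      haveI : NeZero (p ^ (m+1)) := ⟨pow_ne_zero _ (by omega)⟩
      rw [Prod.mk_eq_zero]
      constructor
      · rw [ZMod.castHom_apply, ← ZMod.natCast_val]; exact hcc.1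
      · rw [ZMod.castHom_apply, ← ZMod.natCast_val]; exact hcc.2
    rcases hcases with hc1 | hc1
    · have := pow_smul_ne_zero hp2 hc1
      exact this (congrArg Prod.fst htadd)
    · have := pow_smul_ne_zero hp2 hc1
      exact this (congrArg Prod.snd htadd)
  -- membership in both Sigma sets
  have hsub1 : conjClosure u₁ ⊆ SigmaSet x₁ y₁ := by
    rw [hu₁]
    fin_cases s
    · exact Set.subset_union_left.trans Set.subset_union_left
    · exact Set.subset_union_right.trans Set.subset_union_left
    · exact Set.subset_union_right
  have hsub2 : conjClosure u₂ ⊆ SigmaSet x₂ y₂ := by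
    rw [hu₂]
    fin_cases t
    · exact Set.subset_union_left.trans Set.subset_union_left
    · exact Set.subset_union_right.trans Set.subset_union_left
    · exact Set.subset_union_right
  have hmem : u₂ ^ (p ^ m) ∈ SigmaSet x₁ y₁ ∩ SigmaSet x₂ y₂ := by
    constructor
    · apply hsub1
      rw [hpow]
      exact pow_mem_conjClosure u₁ ((k : ℕ) * p ^ m)
    · exact hsub2 (pow_mem_conjClosure u₂ (p ^ m))
  rw [hsig] at hmem
  exact hgne hmem
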